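/- The following area identities hold: (a) |𝒯(k,1)| = |𝒯(k)| for all k ≥ 5; (b) |𝒯(k,1,2)| = |𝒯(k)| for all k ≥ 9; (c) |𝒯(2,1,k)| = |𝒯(k)| for all k ≥ 9; (d) |𝒯(2,1,k,1)| = |𝒯(k)| for all k ≥ 9; (e) |𝒯(2,1,k,1,2)| = |𝒯(k)| for all k ≥ 9; (f) |𝒯(1,k,1)| = |𝒯(k)| for all k ≥ 6. -/

import Mathlib

open MeasureTheory

/-- The BCZ transform T(x,y) = (y, ⌊(1+x)/y⌋·y − x). -/
noncomputable def bcz (p : ℝ × ℝ) : ℝ × ℝ :=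
  (p.2, (⌊(1 + p.1) / p.2⌋ : ℝ) * p.2 - p.1)

/-- The Farey triangle 𝒯 = {(x,y) : 0 < x ≤ 1, 0 < y ≤ 1, x + y > 1}. -/
def fareyTriangle : Set (ℝ × ℝ) :=
  {p | 0 < p.1 ∧ p.1 ≤ 1 ∧ 0 < p.2 ∧ p.2 ≤ 1 ∧ 1 < p.1 + p.2}

/-- The region 𝒯(k) = {(x,y) ∈ 𝒯 : ⌊(1+x)/y⌋ = k}. -/
def TT (k : ℕ) : Set (ℝ × ℝ) :=
  {p | p ∈ fareyTriangle ∧ ⌊(1 + p.1) / p.2⌋ = (k : ℤ)}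

/-- The region 𝒯(k₁,…,k_r) = 𝒯(k₁) ∩ T⁻¹(𝒯(k₂)) ∩ ⋯ ∩ T^{−(r−1)}(𝒯(k_r)). -/
noncomputable def TTlist (ks : List ℕ) : Set (ℝ × ℝ) :=
  ⋂ i : Fin ks.length, (bcz^[i.1]) ⁻¹' TT (ks.get i)


lemma TT_bounds {k : ℕ} {x y : ℝ} (hp : (x, y) ∈ TT k) :
    0 < x ∧ x ≤ 1 ∧ 0 < y ∧ y ≤ 1 ∧ 1 < x + y ∧
      (k : ℝ) * y ≤ 1 + x ∧ 1 + x < ((k : ℝ) + 1) * y := by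
  obtain ⟨⟨h1, h2, h3, h4, h5⟩, hf⟩ := hp
  have hfl := Int.floor_eq_iff.mp hf
  push_cast at hfl
  exact ⟨h1, h2, h3, h4, h5, (le_div_iff₀ h3).mp hfl.1, (div_lt_iff₀ h3).mp hfl.2⟩

lemma mem_TT_of {k : ℕ} {x y : ℝ} (h1 : 0 < x) (h2 : x ≤ 1) (h3 : 0 < y) (h4 : y ≤ 1)
    (h5 : 1 < x + y) (h6 : (k : ℝ) * y ≤ 1 + x) (h7 : 1 + x < ((k : ℝ) + 1) * y) :
    (x, y) ∈ TT k := by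
  refine ⟨⟨h1, h2, h3, h4, h5⟩, Int.floor_eq_iff.mpr ?_⟩
  push_cast
  exact ⟨(le_div_iff₀ h3).mpr h6, (div_lt_iff₀ h3).mpr h7⟩

lemma bcz_eq {k : ℕ} {x y : ℝ} (h : ⌊(1 + x) / y⌋ = (k : ℤ)) :
    bcz (x, y) = (y, (k : ℝ) * y - x) := by
  simp only [bcz, h]
  push_cast
  rfl

lemma step1 {k : ℕ} (hk : 5 ≤ k) {p : ℝ × ℝ} (hp : p ∈ TT k) : bcz p ∈ TT 1 := by
  obtain ⟨x, y⟩ := p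
  obtain ⟨h1, h2, h3, h4, h5, h6, h7⟩ := TT_bounds hp
  have hk' : (5 : ℝ) ≤ (k : ℝ) := by exact_mod_cast hk
  have hky : 0 ≤ ((k : ℝ) - 5) * y := mul_nonneg (by linarith) h3.le
  rw [bcz_eq hp.2]
  apply mem_TT_of h3 h4
  · nlinarith
  · nlinarith
  · nlinarith
  · push_cast; nlinarith
  · push_cast; nlinarith

lemma step2 {k : ℕ} (hk : 9 ≤ k) {p : ℝ × ℝ} (hp : p ∈ TT k) : bcz (bcz p) ∈ TT 2 := by
  have hb1 := step1 (by omega) hp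
  obtain ⟨x, y⟩ := p
  obtain ⟨h1, h2, h3, h4, h5, h6, h7⟩ := TT_bounds hp
  have hk' : (9 : ℝ) ≤ (k : ℝ) := by exact_mod_cast hk
  have hky : 0 ≤ ((k : ℝ) - 9) * y := mul_nonneg (by linarith) h3.le
  rw [bcz_eq hp.2] at hb1 ⊢
  rw [bcz_eq hb1.2]
  dsimp only
  apply mem_TT_of
  · nlinarith
  · nlinarith
  · push_cast; nlinarith
  · push_cast; nlinarith
  · push_cast; nlinarith
  · push_cast; nlinarith
  · push_cast; nlinarith

/-- g(a,b) = (a-b, a) -/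
noncomputable def gmap : (ℝ × ℝ) →ₗ[ℝ] (ℝ × ℝ) :=
  LinearMap.prod (LinearMap.fst ℝ ℝ ℝ - LinearMap.snd ℝ ℝ ℝ) (LinearMap.fst ℝ ℝ ℝ)

/-- h(a,b) = (a-2b, a-b) -/
noncomputable def hmap : (ℝ × ℝ) →ₗ[ℝ] (ℝ × ℝ) :=
  LinearMap.prod (LinearMap.fst ℝ ℝ ℝ - (2 : ℝ) • LinearMap.snd ℝ ℝ ℝ)
    (LinearMap.fst ℝ ℝ ℝ - LinearMap.snd ℝ ℝ ℝ)

lemma gmap_apply (a b : ℝ) : gmap (a, b) = (a - b, a) := rfl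

lemma hmap_apply (a b : ℝ) : hmap (a, b) = (a - 2 * b, a - b) := by
  simp only [hmap, LinearMap.prod_apply, LinearMap.sub_apply, LinearMap.smul_apply,
    LinearMap.fst_apply, LinearMap.snd_apply, Function.prod, smul_eq_mul]

lemma det_gmap : LinearMap.det gmap = 1 := by
  rw [← LinearMap.det_toMatrix (Module.Basis.finTwoProd ℝ), Matrix.det_fin_two]
  simp [gmap, LinearMap.toMatrix_apply, Module.Basis.finTwoProd]

lemma det_hmap : LinearMap.det hmap = 1 := by
  rw [← LinearMap.det_toMatrix (Module.Basis.finTwoProd ℝ), Matrix.det_fin_two]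
  simp [hmap, LinearMap.toMatrix_apply, Module.Basis.finTwoProd]
  norm_num

lemma vol_gmap (s : Set (ℝ × ℝ)) : volume (gmap '' s) = volume s := by
  rw [Measure.addHaar_image_linearMap, det_gmap]
  simp

lemma vol_hmap (s : Set (ℝ × ℝ)) : volume (hmap '' s) = volume s := by
  rw [Measure.addHaar_image_linearMap, det_hmap]
  simp

/-- preimage step for g : for (a,b) ∈ TT k, k ≥ 6, (a-b, a) ∈ TT 1 and maps back. -/
lemma gstep {k : ℕ} (hk : 6 ≤ k) {a b : ℝ} (hq : (a, b) ∈ TT k) :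
    (a - b, a) ∈ TT 1 ∧ bcz (a - b, a) = (a, b) := by
  obtain ⟨h1, h2, h3, h4, h5, h6, h7⟩ := TT_bounds hq
  have hk' : (6 : ℝ) ≤ (k : ℝ) := by exact_mod_cast hk
  have hky : 0 ≤ ((k : ℝ) - 6) * b := mul_nonneg (by linarith) h3.le
  have hmem : (a - b, a) ∈ TT 1 := by
    apply mem_TT_of
    · nlinarith
    · nlinarith
    · exact h1
    · exact h2
    · push_cast; nlinarith
    · push_cast; nlinarith
    · push_cast; nlinarith
  refine ⟨hmem, ?_⟩
  rw [bcz_eq hmem.2]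
  push_cast
  rw [Prod.mk.injEq]
  exact ⟨by ring, by ring⟩

/-- preimage step for h : for (a,b) ∈ TT k, k ≥ 9, (a-2b, a-b) ∈ TT 2 and maps to (a-b, a). -/
lemma hstep {k : ℕ} (hk : 9 ≤ k) {a b : ℝ} (hq : (a, b) ∈ TT k) :
    (a - 2 * b, a - b) ∈ TT 2 ∧ bcz (a - 2 * b, a - b) = (a - b, a) := by
  obtain ⟨h1, h2, h3, h4, h5, h6, h7⟩ := TT_bounds hq
  have hk' : (9 : ℝ) ≤ (k : ℝ) := by exact_mod_cast hk
  have hky : 0 ≤ ((k : ℝ) - 9) * b := mul_nonneg (by linarith) h3.le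
  have hmem : (a - 2 * b, a - b) ∈ TT 2 := by
    apply mem_TT_of
    · nlinarith
    · nlinarith
    · nlinarith
    · nlinarith
    · push_cast; nlinarith
    · push_cast; nlinarith
    · push_cast; nlinarith
  refine ⟨hmem, ?_⟩
  rw [bcz_eq hmem.2]
  push_cast
  rw [Prod.mk.injEq]
  exact ⟨by ring, by ring⟩

lemma TTlist_singleton (k : ℕ) : TTlist [k] = TT k := by
  ext p
  simp [TTlist, Fin.forall_fin_one]

lemma TTlist_cons (k : ℕ) (ks : List ℕ) :
    TTlist (k :: ks) = TT k ∩ bcz ⁻¹' TTlist ks := by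
  ext p
  simp only [TTlist, Set.mem_iInter, Set.mem_inter_iff, Set.mem_preimage]
  constructor
  · intro h
    refine ⟨by simpa using h ⟨0, Nat.succ_pos _⟩, fun i => ?_⟩
    have := h i.succ
    simpa [Function.iterate_succ_apply] using this
  · rintro ⟨h0, h⟩ i
    refine Fin.cases ?_ (fun j => ?_) i
    · simpa using h0
    · simpa [Function.iterate_succ_apply] using h j

lemma set_a {k : ℕ} (hk : 5 ≤ k) : TT k ∩ bcz ⁻¹' TT 1 = TT k :=
  Set.inter_eq_left.mpr fun _ hp => step1 hk hp

lemma set_b {k : ℕ} (hk : 9 ≤ k) : TT k ∩ bcz ⁻¹' (TT 1 ∩ bcz ⁻¹' TT 2) = TT k :=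
  Set.inter_eq_left.mpr fun _ hp => ⟨step1 (by omega) hp, step2 hk hp⟩

/-- core identity for (f) : 𝒯(1) ∩ T⁻¹𝒯(k) = g(𝒯(k)) for k ≥ 6. -/
lemma set_f {k : ℕ} (hk : 6 ≤ k) : TT 1 ∩ bcz ⁻¹' TT k = gmap '' TT k := by
  ext p
  constructor
  · rintro ⟨hp1, hpk⟩
    refine ⟨bcz p, hpk, ?_⟩
    obtain ⟨x, y⟩ := p
    rw [bcz_eq hp1.2]
    rw [gmap_apply]
    dsimp only
    push_cast
    rw [Prod.mk.injEq]
    exact ⟨by ring, by ring⟩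
  · rintro ⟨⟨a, b⟩, hq, rfl⟩
    rw [gmap_apply]
    obtain ⟨hmem, hb⟩ := gstep hk hq
    exact ⟨hmem, by rw [Set.mem_preimage, hb]; exact hq⟩

/-- core identity for (c) : 𝒯(2) ∩ T⁻¹(𝒯(1) ∩ T⁻¹𝒯(k)) = h(𝒯(k)) for k ≥ 9. -/
lemma set_c {k : ℕ} (hk : 9 ≤ k) :
    TT 2 ∩ bcz ⁻¹' (TT 1 ∩ bcz ⁻¹' TT k) = hmap '' TT k := by
  ext p
  constructor
  · rintro ⟨hp2, hp1, hpk⟩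
    refine ⟨bcz (bcz p), hpk, ?_⟩
    obtain ⟨x, y⟩ := p
    rw [bcz_eq hp2.2] at hp1 ⊢
    rw [bcz_eq hp1.2]
    rw [hmap_apply]
    dsimp only
    push_cast
    rw [Prod.mk.injEq]
    exact ⟨by ring, by ring⟩
  · rintro ⟨⟨a, b⟩, hq, rfl⟩
    rw [hmap_apply]
    obtain ⟨hmem2, hb2⟩ := hstep hk hq
    obtain ⟨hmem1, hb1⟩ := gstep (by omega) hq
    refine ⟨hmem2, ?_⟩
    rw [Set.mem_preimage, hb2]
    exact ⟨hmem1, by rw [Set.mem_preimage, hb1]; exact hq⟩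

/-- The area identities of Lemma 7. -/

theorem volume_TTlist_identities :
    (∀ k : ℕ, 5 ≤ k → volume (TTlist [k, 1]) = volume (TTlist [k])) ∧
    (∀ k : ℕ, 9 ≤ k → volume (TTlist [k, 1, 2]) = volume (TTlist [k])) ∧
    (∀ k : ℕ, 9 ≤ k → volume (TTlist [2, 1, k]) = volume (TTlist [k])) ∧
    (∀ k : ℕ, 9 ≤ k → volume (TTlist [2, 1, k, 1]) = volume (TTlist [k])) ∧
    (∀ k : ℕ, 9 ≤ k → volume (TTlist [2, 1, k, 1, 2]) = volume (TTlist [k])) ∧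
    (∀ k : ℕ, 6 ≤ k → volume (TTlist [1, k, 1]) = volume (TTlist [k])) := by
  refine ⟨fun k hk => ?_, fun k hk => ?_, fun k hk => ?_, fun k hk => ?_,
    fun k hk => ?_, fun k hk => ?_⟩
  · rw [TTlist_cons, TTlist_singleton, set_a hk, TTlist_singleton]
  · rw [TTlist_cons, TTlist_cons, TTlist_singleton, set_b hk, TTlist_singleton]
  · rw [TTlist_cons, TTlist_cons, TTlist_singleton, set_c hk, vol_hmap]
  · rw [TTlist_cons, TTlist_cons, TTlist_cons, TTlist_singleton, set_a (by omega : 5 ≤ k),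
      set_c hk, vol_hmap, TTlist_singleton]
  · rw [TTlist_cons, TTlist_cons, TTlist_cons, TTlist_cons, TTlist_singleton,
      set_b hk, set_c hk, vol_hmap, TTlist_singleton]
  · rw [TTlist_cons, TTlist_cons, TTlist_singleton, set_a (by omega : 5 ≤ k),
      set_f hk, vol_gmap, TTlist_singleton]
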